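/- Let R be a simply connected region in the square lattice, let x and y be points of V(R) at Euclidean distance 1 joined by a lattice edge of R, and let x′ ∈ V(R). If there exists a geodesic path from x′ to x all of whose points lie in V(R) and which contains no point of ∂R other than possibly x′, then there exists a geodesic path from x′ to y all of whose points lie in V(R). -/

import Mathlib

/-- The closed unit square with lower-left corner `s`, as a subset of `ℝ × ℝ`. -/
def unitSq (s : ℤ × ℤ) : Set (ℝ × ℝ) :=
  Set.Icc (s.1 : ℝ) (s.1 + 1) ×ˢ Set.Icc (s.2 : ℝ) (s.2 + 1)

/-- The union of the closed unit squares of a region `R`. -/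
def regionSpace (R : Finset (ℤ × ℤ)) : Set (ℝ × ℝ) := ⋃ s ∈ R, unitSq s

/-- The embedding of a lattice point into the plane. -/
def embPt (x : ℤ × ℤ) : ℝ × ℝ := ((x.1 : ℝ), (x.2 : ℝ))

/-- The four corners of the unit square with lower-left corner `s`. -/
def sqCorners (s : ℤ × ℤ) : Set (ℤ × ℤ) :=
  {s, (s.1 + 1, s.2), (s.1, s.2 + 1), (s.1 + 1, s.2 + 1)}

/-- `V R` : the lattice points that are corners of squares of `R`. -/
def V (R : Finset (ℤ × ℤ)) : Set (ℤ × ℤ) := {x | ∃ s ∈ R, x ∈ sqCorners s}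

/-- `bdry R` : lattice points lying on the topological boundary of the region. -/
def bdry (R : Finset (ℤ × ℤ)) : Set (ℤ × ℤ) := {x | embPt x ∈ frontier (regionSpace R)}

/-- The square with lower-left corner `s` is white when `s.1 + s.2` is even. -/
def White (s : ℤ × ℤ) : Prop := Even (s.1 + s.2)

/-- A domino: a pair of unit squares sharing a side. -/
def IsDomino (d : Finset (ℤ × ℤ)) : Prop :=
  ∃ s t : ℤ × ℤ, d = {s, t} ∧ (t - s = (1, 0) ∨ t - s = (0, 1))

/-- A domino tiling of `R` : a partition of the squares of `R` into dominoes. -/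
def IsDominoTiling (R : Finset (ℤ × ℤ)) (T : Finset (Finset (ℤ × ℤ))) : Prop :=
  (∀ d ∈ T, IsDomino d ∧ ∀ s ∈ d, s ∈ R) ∧ ∀ s ∈ R, ∃! d, d ∈ T ∧ s ∈ d

/-- The four unit steps in the square lattice. -/
def unitSteps : Set (ℤ × ℤ) := {(1, 0), (-1, 0), (0, 1), (0, -1)}

/-- A directed lattice edge of `R`. -/
def DirectedEdge (R : Finset (ℤ × ℤ)) (x y : ℤ × ℤ) : Prop :=
  x ∈ V R ∧ y ∈ V R ∧ y - x ∈ unitSteps ∧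
    segment ℝ (embPt x) (embPt y) ⊆ regionSpace R

/-- A directed lattice edge of `R` lying on the boundary `∂R`. -/
def BoundaryEdge (R : Finset (ℤ × ℤ)) (x y : ℤ × ℤ) : Prop :=
  DirectedEdge R x y ∧ segment ℝ (embPt x) (embPt y) ⊆ frontier (regionSpace R)

/-- The union of the closed squares of a domino. -/
def dominoSpace (d : Finset (ℤ × ℤ)) : Set (ℝ × ℝ) := ⋃ s ∈ d, unitSq s

/-- The edge `(x, y)` belongs to the tiling `T` : its segment is not contained in the
interior of a domino of `T`. -/
def EdgeInTiling (R : Finset (ℤ × ℤ)) (T : Finset (Finset (ℤ × ℤ))) (x y : ℤ × ℤ) : Prop :=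
  DirectedEdge R x y ∧
    ¬ ∃ d ∈ T, segment ℝ (embPt x) (embPt y) ⊆ interior (dominoSpace d)

/-- The unit square adjacent to the directed edge `(x, y)` on its left. -/
def leftSq (x y : ℤ × ℤ) : ℤ × ℤ :=
  if y = (x.1 + 1, x.2) then (x.1, x.2)
  else if y = (x.1 - 1, x.2) then (x.1 - 1, x.2 - 1)
  else if y = (x.1, x.2 + 1) then (x.1 - 1, x.2)
  else (x.1, x.2 - 1)

/-- `h` is a height function of the tiling `T` of `R`. -/
def IsHeightFunction (R : Finset (ℤ × ℤ)) (T : Finset (Finset (ℤ × ℤ)))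
    (h : ℤ × ℤ → ℤ) : Prop :=
  ∀ x y : ℤ × ℤ, EdgeInTiling R T x y → White (leftSq x y) → h x - h y = 1

/-- `S` is a forcing set of the tiling `T` of `R`. -/
def IsForcingSet (R : Finset (ℤ × ℤ)) (T S : Finset (Finset (ℤ × ℤ))) : Prop :=
  S ⊆ T ∧ ∀ T', IsDominoTiling R T' → S ⊆ T' → T' = T

/-- The forcing number of `R`. -/
noncomputable def forcingNumber (R : Finset (ℤ × ℤ)) : ℕ :=
  sInf {n | ∃ T S, IsDominoTiling R T ∧ IsForcingSet R T S ∧ S.card = n}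

/-- The function `α`. -/
def alpha (x y : ℤ × ℤ) : ℤ :=
  if (Even (x.1 - x.2) ∧ y.2 - x.2 ≤ y.1 - x.1) ∨ (¬ Even (x.1 - x.2) ∧ y.1 - x.1 < y.2 - x.2)
  then 2 * max |y.1 - x.1| |y.2 - x.2| + ((y.1 - x.1) - (y.2 - x.2)) % 2
  else 2 * max |y.1 - x.1| |y.2 - x.2| - ((y.1 - x.1) - (y.2 - x.2)) % 2

/-- The Chebyshev norm on `ℤ × ℤ`. -/
def cheb (v : ℤ × ℤ) : ℤ := max |v.1| |v.2|

/-- A geodesic path in the square lattice. -/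
def IsGeodesicPath (n : ℕ) (f : Fin (n + 1) → ℤ × ℤ) : Prop :=
  ∀ i : Fin n, f i.castSucc ≠ f i.succ ∧
    (∃ s : ℤ × ℤ, f i.castSucc ∈ sqCorners s ∧ f i.succ ∈ sqCorners s) ∧
    cheb (f i.succ - f 0) = cheb (f i.castSucc - f 0) + 1

/-- `x ∼_R y` : some geodesic path from `x` to `y` has all of its points in `V R`. -/
def geoRel (R : Finset (ℤ × ℤ)) (x y : ℤ × ℤ) : Prop :=
  ∃ (n : ℕ) (f : Fin (n + 1) → ℤ × ℤ), IsGeodesicPath n f ∧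
    f 0 = x ∧ f (Fin.last n) = y ∧ ∀ i, f i ∈ V R

/-- The black squares of `R`. -/
def blackSquares (R : Finset (ℤ × ℤ)) : Finset (ℤ × ℤ) :=
  R.filter fun s => ¬ Even (s.1 + s.2)

/-- The set of white squares of `R` adjacent to at least one square of `U`. -/
noncomputable def nbhdSq (R U : Finset (ℤ × ℤ)) : Finset (ℤ × ℤ) :=
  @Finset.filter _ (fun w => Even (w.1 + w.2) ∧ ∃ b ∈ U, w - b ∈ unitSteps)
    (Classical.decPred _) R

/-- The excess `e(U) = |N(U)| - |U|`. -/
noncomputable def excess (R U : Finset (ℤ × ℤ)) : ℤ :=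
  ((nbhdSq R U).card : ℤ) - U.card

/-- The maximum excess of an ordering (given as a list) of the black squares. -/
noncomputable def maxExcess (R : Finset (ℤ × ℤ)) (l : List (ℤ × ℤ)) : ℤ :=
  sSup {z : ℤ | ∃ k, 1 ≤ k ∧ k ≤ l.length ∧ z = excess R (l.take k).toFinset}

/-- The minimum maximum excess of `R` over all orderings of its black squares. -/
noncomputable def minMaxExcess (R : Finset (ℤ × ℤ)) : ℤ :=
  sInf {z : ℤ | ∃ l : List (ℤ × ℤ), l.Nodup ∧ l.toFinset = blackSquares R ∧
    z = maxExcess R l}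

/-- The `2n × 2n` square region. -/
noncomputable def squareRegion (n : ℕ) : Finset (ℤ × ℤ) :=
  Finset.Icc ((0 : ℤ), (0 : ℤ)) ((2 * n - 1 : ℤ), (2 * n - 1 : ℤ))

/-- The square of side `2k` centered at `x` (as a set of unit squares). -/
noncomputable def centerSquare (x : ℤ × ℤ) (k : ℕ) : Finset (ℤ × ℤ) :=
  Finset.Icc ((x.1 - k, x.2 - k) : ℤ × ℤ) ((x.1 + k - 1, x.2 + k - 1) : ℤ × ℤ)

/-- Possible values at `x` of height functions of tilings of `R` normalized at `v₀`. -/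
def heightVals (R : Finset (ℤ × ℤ)) (v₀ x : ℤ × ℤ) : Set ℤ :=
  {m | ∃ T h, IsDominoTiling R T ∧ IsHeightFunction R T h ∧ h v₀ = 0 ∧ h x = m}

/-- `c(x)` : the side of the largest square centered at `x` whose removal keeps `R` tileable. -/
noncomputable def maxSquareSide (R : Finset (ℤ × ℤ)) (x : ℤ × ℤ) : ℕ :=
  sSup {m : ℕ | ∃ k : ℕ, m = 2 * k ∧ centerSquare x k ⊆ R ∧
    ∃ T, IsDominoTiling (R \ centerSquare x k) T}


section AuxGeodesic

private lemma cheb_zero' : cheb (0 : ℤ × ℤ) = 0 := by simp [cheb]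

private lemma cheb_sub_comm' (u v : ℤ × ℤ) : cheb (u - v) = cheb (v - u) := by
  obtain ⟨u1, u2⟩ := u; obtain ⟨v1, v2⟩ := v
  simp only [cheb, Prod.mk_sub_mk, abs_sub_comm]

private lemma cheb_triangle' (u v : ℤ × ℤ) : cheb (u + v) ≤ cheb u + cheb v := by
  obtain ⟨u1, u2⟩ := u; obtain ⟨v1, v2⟩ := v
  simp only [cheb, Prod.mk_add_mk, abs_eq_max_neg]
  omega

private lemma cheb_pos_of_ne' (u : ℤ × ℤ) (h : u ≠ 0) : 1 ≤ cheb u := by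
  obtain ⟨u1, u2⟩ := u
  rw [Ne, Prod.mk_eq_zero] at h
  simp only [cheb, abs_eq_max_neg]
  omega

private lemma adj_corners' (a b : ℤ × ℤ) (h : cheb (b - a) = 1) :
    ∃ s, a ∈ sqCorners s ∧ b ∈ sqCorners s := by
  obtain ⟨a1, a2⟩ := a; obtain ⟨b1, b2⟩ := b
  simp only [cheb, Prod.mk_sub_mk, abs_eq_max_neg] at h
  refine ⟨(min a1 b1, min a2 b2), ?_, ?_⟩ <;>
  · simp only [sqCorners, Set.mem_insert_iff, Set.mem_singleton_iff, Prod.mk.injEq]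
    omega

private lemma corners_cheb' {a b s : ℤ × ℤ} (ha : a ∈ sqCorners s) (hb : b ∈ sqCorners s)
    (hne : a ≠ b) : cheb (b - a) = 1 := by
  obtain ⟨a1, a2⟩ := a; obtain ⟨b1, b2⟩ := b; obtain ⟨s1, s2⟩ := s
  simp only [sqCorners, Set.mem_insert_iff, Set.mem_singleton_iff, Prod.mk.injEq] at ha hb
  rw [Ne, Prod.mk.injEq] at hne
  simp only [cheb, Prod.mk_sub_mk, abs_eq_max_neg]
  omega

private lemma coordC' (a c n m : ℤ) (hn : 1 ≤ n) (ha : |a| ≤ n) (hc : |c| ≤ m)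
    (hm : n ≤ m) (hm2 : m ≤ n + 1) (hd : |c - a| ≤ 2) :
    ∃ e : ℤ, |e| ≤ 1 ∧ |c - e| ≤ m - 1 ∧ |c - a - e| ≤ 1 := by
  refine ⟨min (min 1 (c + m - 1)) (max (max (-1) (c - m + 1)) (c - a)), ?_, ?_, ?_⟩ <;>
  · simp only [abs_eq_max_neg] at *; omega

private lemma claimC' (a1 a2 c1 c2 n : ℤ) (hn : 1 ≤ n)
    (ha : max |a1| |a2| = n)
    (hc1 : n ≤ max |c1| |c2|) (hc2 : max |c1| |c2| ≤ n + 1)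
    (hca : max |c1 - a1| |c2 - a2| = 2) :
    ∃ d1 d2 : ℤ, max |d1| |d2| = max |c1| |c2| - 1 ∧
      max |d1 - a1| |d2 - a2| ≤ 1 ∧ max |c1 - d1| |c2 - d2| = 1 := by
  obtain ⟨e1, he1, he1', he1''⟩ := coordC' a1 c1 n (max |c1| |c2|) hn
    (by simp only [abs_eq_max_neg] at *; omega) (le_max_left _ _) hc1 hc2
    (by simp only [abs_eq_max_neg] at *; omega)
  obtain ⟨e2, he2, he2', he2''⟩ := coordC' a2 c2 n (max |c1| |c2|) hn
    (by simp only [abs_eq_max_neg] at *; omega) (le_max_right _ _) hc1 hc2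
    (by simp only [abs_eq_max_neg] at *; omega)
  refine ⟨c1 - e1, c2 - e2, ?_, ?_, ?_⟩
  · clear ha hca hc2 he1'' he2'' hn
    simp only [abs_eq_max_neg] at *; omega
  · clear ha hca hc1 hc2 he1 he2 he1' he2' hn
    simp only [abs_eq_max_neg] at *; omega
  · clear ha hc1 hc2 he1' he2' hn
    simp only [abs_eq_max_neg] at *; omega

private lemma claimCP (a c : ℤ × ℤ) (n : ℤ) (hn : 1 ≤ n) (ha : cheb a = n)
    (hc1 : n ≤ cheb c) (hc2 : cheb c ≤ n + 1) (hca : cheb (c - a) = 2) :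
    ∃ d : ℤ × ℤ, cheb d = cheb c - 1 ∧ cheb (d - a) ≤ 1 ∧ cheb (c - d) = 1 := by
  obtain ⟨a1, a2⟩ := a; obtain ⟨c1, c2⟩ := c
  simp only [cheb, Prod.mk_sub_mk] at ha hc1 hc2 hca
  obtain ⟨d1, d2, h1, h2, h3⟩ := claimC' a1 a2 c1 c2 n hn ha hc1 hc2 hca
  refine ⟨(d1, d2), ?_, ?_, ?_⟩ <;> simp only [cheb, Prod.mk_sub_mk] <;> assumption

/-- A geodesic progression indexed by `ℕ`. -/
private def SqGP (F : ℕ → ℤ × ℤ) (n : ℕ) : Prop :=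
  (∀ i : ℕ, i ≤ n → cheb (F i - F 0) = (i : ℤ)) ∧
    ∀ i : ℕ, i < n → cheb (F (i + 1) - F i) = 1

private def SqReach (R : Finset (ℤ × ℤ)) (x y : ℤ × ℤ) : Prop :=
  ∃ n F, SqGP F n ∧ F 0 = x ∧ F n = y ∧ ∀ i, i ≤ n → F i ∈ V R

private lemma sqReach_refl {R : Finset (ℤ × ℤ)} {x : ℤ × ℤ} (hx : x ∈ V R) :
    SqReach R x x := by
  refine ⟨0, fun _ => x, ⟨?_, ?_⟩, rfl, rfl, fun i _ => hx⟩
  · intro i hi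
    obtain rfl : i = 0 := by omega
    rw [sub_self, cheb_zero']; simp
  · intro i hi; omega

private lemma sqReach_append {R : Finset (ℤ × ℤ)} {x z y : ℤ × ℤ}
    (h : SqReach R x z) (hy : y ∈ V R)
    (h1 : cheb (y - z) = 1) (h2 : cheb (y - x) = cheb (z - x) + 1) : SqReach R x y := by
  obtain ⟨n, F, ⟨hg1, hg2⟩, h0, hn, hV⟩ := h
  subst h0; subst hn
  refine ⟨n + 1, fun i => if i ≤ n then F i else y, ⟨?_, ?_⟩, ?_, ?_, ?_⟩
  · intro i hi
    by_cases hin : i ≤ n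
    · simp only [if_pos hin, if_pos (Nat.zero_le n)]
      exact hg1 i hin
    · obtain rfl : i = n + 1 := by omega
      simp only [if_neg hin, if_pos (Nat.zero_le n)]
      rw [h2, hg1 n le_rfl]; push_cast; ring
  · intro i hi
    by_cases hin : i < n
    · simp only [if_pos (by omega : i + 1 ≤ n), if_pos (by omega : i ≤ n)]
      exact hg2 i hin
    · have he : i = n := by omega
      rw [he]
      simp only [if_neg (by omega : ¬ (n + 1 ≤ n)), if_pos le_rfl]
      exact h1
  · simp
  · simp only [if_neg (by omega : ¬ (n + 1 ≤ n))]
  · intro i hi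
    by_cases hin : i ≤ n
    · simp only [if_pos hin]; exact hV i hin
    · simp only [if_neg hin]; exact hy

private lemma geoRel_of_sqReach {R : Finset (ℤ × ℤ)} {x y : ℤ × ℤ}
    (h : SqReach R x y) : geoRel R x y := by
  obtain ⟨n, F, ⟨hg1, hg2⟩, h0, hn, hV⟩ := h
  refine ⟨n, fun i => F i.val, ?_, ?_, ?_, ?_⟩
  · intro i
    have e1 : (fun j : Fin (n + 1) => F j.val) i.castSucc = F i.val := by
      simp [Fin.coe_castSucc]
    have e2 : (fun j : Fin (n + 1) => F j.val) i.succ = F (i.val + 1) := by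
      simp [Fin.val_succ]
    have e0 : (fun j : Fin (n + 1) => F j.val) 0 = F 0 := by simp
    refine ⟨?_, ?_, ?_⟩
    · rw [e1, e2]
      intro hc
      have hh := hg2 i.val i.isLt
      rw [← hc, sub_self, cheb_zero'] at hh
      omega
    · rw [e1, e2]
      exact adj_corners' _ _ (hg2 i.val i.isLt)
    · rw [e1, e2, e0, hg1 (i.val + 1) (by omega), hg1 i.val (by omega)]
      push_cast; ring
  · simpa using h0
  · simpa using hn
  · intro i; exact hV i.val (by omega)

private lemma key_lemma (R : Finset (ℤ × ℤ)) :
    ∀ (n : ℕ) (F : ℕ → ℤ × ℤ), SqGP F n →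
    (∀ i, i ≤ n → F i ∈ V R) →
    (∀ i, 1 ≤ i → i ≤ n → ∀ q : ℤ × ℤ, cheb (q - F i) ≤ 1 → q ∈ V R) →
    ∀ y : ℤ × ℤ, y ∈ V R → cheb (y - F n) ≤ 1 → SqReach R (F 0) y := by
  intro n
  induction n with
  | zero =>
    intro F hGP hV _ y hy hcy
    by_cases h : y = F 0
    · subst h; exact sqReach_refl (hV 0 le_rfl)
    · have h1 : cheb (y - F 0) = 1 :=
        le_antisymm hcy (cheb_pos_of_ne' _ (sub_ne_zero.mpr h))
      refine sqReach_append (sqReach_refl (hV 0 le_rfl)) hy h1 ?_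
      rw [sub_self, cheb_zero']; omega
  | succ n IH =>
    intro F hGP hV hfat y hy hcy
    have hGPn : SqGP F n := ⟨fun i hi => hGP.1 i (by omega), fun i hi => hGP.2 i (by omega)⟩
    by_cases hyw : cheb (y - F n) ≤ 1
    · exact IH F hGPn (fun i hi => hV i (by omega)) (fun i h1 h2 => hfat i h1 (by omega)) y hy hyw
    · have hvw : cheb (F (n + 1) - F n) = 1 := hGP.2 n (by omega)
      have hw : cheb (F n - F 0) = (n : ℤ) := hGP.1 n (by omega)
      have hv : cheb (F (n + 1) - F 0) = (n : ℤ) + 1 := by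
        have hh := hGP.1 (n + 1) le_rfl
        push_cast at hh; exact hh
      have htri : cheb (y - F n) ≤ 2 := by
        have h' := cheb_triangle' (y - F (n + 1)) (F (n + 1) - F n)
        rw [sub_add_sub_cancel] at h'
        omega
      have hyw2 : cheb (y - F n) = 2 := by omega
      have hlow : (n : ℤ) ≤ cheb (y - F 0) := by
        have h' := cheb_triangle' (F (n + 1) - y) (y - F 0)
        rw [sub_add_sub_cancel] at h'
        have h'' : cheb (F (n + 1) - y) ≤ 1 := by
          rw [cheb_sub_comm']; exact hcy
        omega
      have hhigh : cheb (y - F 0) ≤ (n : ℤ) + 2 := by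
        have h' := cheb_triangle' (y - F (n + 1)) (F (n + 1) - F 0)
        rw [sub_add_sub_cancel] at h'
        omega
      by_cases hm : cheb (y - F 0) = (n : ℤ) + 2
      · have hyv : cheb (y - F (n + 1)) = 1 := by
          have hne : y ≠ F (n + 1) := by
            intro e; rw [e] at hm; omega
          have := cheb_pos_of_ne' _ (sub_ne_zero.mpr hne)
          omega
        exact sqReach_append ⟨n + 1, F, hGP, rfl, rfl, hV⟩ hy hyv (by omega)
      · have h1n : (1 : ℤ) ≤ (n : ℤ) := by
          by_contra hc
          have hn0 : n = 0 := by omega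
          subst hn0
          push_cast at hm
          omega
        obtain ⟨d, hd1, hd2, hd3⟩ := claimCP (F n - F 0) (y - F 0) (n : ℤ) h1n hw hlow
          (by omega) (by rw [sub_sub_sub_cancel_right]; exact hyw2)
        have hzw : cheb (d + F 0 - F n) ≤ 1 := by
          have e : d + F 0 - F n = d - (F n - F 0) := by ring
          rw [e]; exact hd2
        have hn1 : 1 ≤ n := by exact_mod_cast h1n
        have hzV : d + F 0 ∈ V R := hfat n hn1 (by omega) _ hzw
        have hz : SqReach R (F 0) (d + F 0) :=
          IH F hGPn (fun i hi => hV i (by omega)) (fun i a b => hfat i a (by omega)) _ hzV hzw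
        refine sqReach_append hz hy ?_ ?_
        · have e : y - (d + F 0) = (y - F 0) - d := by ring
          rw [e]; exact hd3
        · have e : d + F 0 - F 0 = d := by ring
          rw [e, hd1]
          omega

private lemma embPt_mem_of_corner {s p : ℤ × ℤ} (hp : p ∈ sqCorners s) :
    embPt p ∈ unitSq s := by
  simp only [sqCorners, Set.mem_insert_iff, Set.mem_singleton_iff] at hp
  obtain ⟨s1, s2⟩ := s
  rcases hp with rfl | rfl | rfl | rfl <;>
  · simp only [unitSq, embPt, Set.mem_prod, Set.mem_Icc]
    refine ⟨⟨?_, ?_⟩, ?_, ?_⟩ <;> push_cast <;> linarith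

private lemma isClosed_regionSpace (R : Finset (ℤ × ℤ)) : IsClosed (regionSpace R) := by
  apply isClosed_biUnion_finset
  intro s _
  exact IsClosed.prod isClosed_Icc isClosed_Icc

private lemma int_squeeze' {s a : ℤ} {v : ℝ} (h1 : (s : ℝ) ≤ v) (h2 : v ≤ (s : ℝ) + 1)
    (h3 : (a : ℝ) < v) (h4 : v < (a : ℝ) + 1) : s = a := by
  have l1 : (s : ℝ) < (a : ℝ) + 1 := lt_of_le_of_lt h1 h4
  have l2 : (a : ℝ) < (s : ℝ) + 1 := lt_of_lt_of_le h3 h2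
  have l1' : s < a + 1 := by exact_mod_cast l1
  have l2' : a < s + 1 := by exact_mod_cast l2
  omega

private lemma mem_square_of_interior (R : Finset (ℤ × ℤ)) (p1 p2 : ℤ)
    (h : embPt (p1, p2) ∈ interior (regionSpace R)) (a b : ℤ)
    (ha : a = p1 - 1 ∨ a = p1) (hb : b = p2 - 1 ∨ b = p2) : (a, b) ∈ R := by
  obtain ⟨ε, hε, hball⟩ := Metric.isOpen_iff.mp isOpen_interior _ h
  have h01 : (0 : ℝ) < min ε 1 := lt_min hε one_pos
  set δ : ℝ := min ε 1 / 2 with hδdef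
  have hδ0 : (0 : ℝ) < δ := half_pos h01
  have hδmin : δ < min ε 1 := by rw [hδdef]; linarith
  have hδε : δ < ε := lt_of_lt_of_le hδmin (min_le_left ε 1)
  have hδ1 : δ < 1 := lt_of_lt_of_le hδmin (min_le_right ε 1)
  set ξ : ℝ := if a = p1 then (p1 : ℝ) + δ else (p1 : ℝ) - δ with hξdef
  set η : ℝ := if b = p2 then (p2 : ℝ) + δ else (p2 : ℝ) - δ with hηdef
  have hξ : (a : ℝ) < ξ ∧ ξ < (a : ℝ) + 1 ∧ |ξ - (p1 : ℝ)| = δ := by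
    rcases ha with h' | h'
    · have hne : ¬ (a = p1) := by omega
      rw [hξdef, if_neg hne, h']
      push_cast
      refine ⟨by linarith, by linarith, ?_⟩
      rw [show (p1 : ℝ) - δ - p1 = -δ by ring, abs_neg, abs_of_pos hδ0]
    · rw [hξdef, if_pos h', h']
      refine ⟨by linarith, by linarith, ?_⟩
      rw [show (p1 : ℝ) + δ - p1 = δ by ring, abs_of_pos hδ0]
  have hη : (b : ℝ) < η ∧ η < (b : ℝ) + 1 ∧ |η - (p2 : ℝ)| = δ := by
    rcases hb with h' | h'
    · have hne : ¬ (b = p2) := by omega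
      rw [hηdef, if_neg hne, h']
      push_cast
      refine ⟨by linarith, by linarith, ?_⟩
      rw [show (p2 : ℝ) - δ - p2 = -δ by ring, abs_neg, abs_of_pos hδ0]
    · rw [hηdef, if_pos h', h']
      refine ⟨by linarith, by linarith, ?_⟩
      rw [show (p2 : ℝ) + δ - p2 = δ by ring, abs_of_pos hδ0]
  have hmem : ((ξ, η) : ℝ × ℝ) ∈ regionSpace R := by
    apply interior_subset
    apply hball
    rw [Metric.mem_ball, Prod.dist_eq, Real.dist_eq, Real.dist_eq]
    show max |ξ - (p1 : ℝ)| |η - (p2 : ℝ)| < ε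
    rw [hξ.2.2, hη.2.2, max_self]
    exact hδε
  simp only [regionSpace, Set.mem_iUnion] at hmem
  obtain ⟨s, hsR, hq⟩ := hmem
  obtain ⟨s1, s2⟩ := s
  simp only [unitSq, Set.mem_prod, Set.mem_Icc] at hq
  obtain ⟨⟨hq1, hq2⟩, hq3, hq4⟩ := hq
  have e1 : s1 = a := int_squeeze' hq1 hq2 hξ.1 hξ.2.1
  have e2 : s2 = b := int_squeeze' hq3 hq4 hη.1 hη.2.1
  rw [show ((a, b) : ℤ × ℤ) = (s1, s2) by rw [e1, e2]]
  exact hsR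

private lemma fat_of_nonbdry {R : Finset (ℤ × ℤ)} {p : ℤ × ℤ}
    (hp : p ∈ V R) (hb : p ∉ bdry R) :
    ∀ q : ℤ × ℤ, cheb (q - p) ≤ 1 → q ∈ V R := by
  obtain ⟨p1, p2⟩ := p
  have hmem : embPt (p1, p2) ∈ regionSpace R := by
    simp only [V, Set.mem_setOf_eq] at hp
    obtain ⟨s, hs, hc⟩ := hp
    simp only [regionSpace, Set.mem_iUnion]
    exact ⟨s, hs, embPt_mem_of_corner hc⟩
  have hint : embPt (p1, p2) ∈ interior (regionSpace R) := by
    by_contra hc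
    have hfr : embPt (p1, p2) ∈ frontier (regionSpace R) := by
      rw [(isClosed_regionSpace R).frontier_eq]
      exact ⟨hmem, hc⟩
    exact hb hfr
  intro q hq
  obtain ⟨q1, q2⟩ := q
  simp only [cheb, Prod.mk_sub_mk, abs_eq_max_neg] at hq
  refine ⟨(p1 - 1 + max (q1 - p1) 0, p2 - 1 + max (q2 - p2) 0), ?_, ?_⟩
  · exact mem_square_of_interior R p1 p2 hint _ _ (by omega) (by omega)
  · simp only [sqCorners, Set.mem_insert_iff, Set.mem_singleton_iff, Prod.mk.injEq]
    omega

end AuxGeodesic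

/-- If there is a geodesic path from `x'` to `x` inside `V(R)` touching
`∂R` at most at `x'`, and `(x, y)` is a lattice edge of `R`, then there is a geodesic
path from `x'` to `y` inside `V(R)`. -/
theorem geodesic_path_to_neighbor
    (R : Finset (ℤ × ℤ)) (hne : R.Nonempty)
    (hsc : SimplyConnectedSpace (regionSpace R))
    (x y x' : ℤ × ℤ) (hx' : x' ∈ V R)
    (hedge : DirectedEdge R x y)
    (hpath : ∃ (n : ℕ) (f : Fin (n + 1) → ℤ × ℤ), IsGeodesicPath n f ∧
      f 0 = x' ∧ f (Fin.last n) = x ∧ (∀ i, f i ∈ V R) ∧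
      ∀ i : Fin (n + 1), i ≠ 0 → f i ∉ bdry R) :
    geoRel R x' y := by
  obtain ⟨n, f, hf, h0, hlast, hVf, hbf⟩ := hpath
  have hyV : y ∈ V R := hedge.2.1
  have hyx : cheb (y - x) = 1 := by
    have h := hedge.2.2.1
    simp only [unitSteps, Set.mem_insert_iff, Set.mem_singleton_iff] at h
    rcases h with h | h | h | h <;> rw [h] <;> decide
  set F : ℕ → ℤ × ℤ := fun i => f ⟨min i n, by omega⟩ with hFdef
  have hFi : ∀ i, ∀ hi : i ≤ n, F i = f ⟨i, by omega⟩ := fun i hi =>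
    congrArg f (Fin.ext (by simp [Nat.min_eq_left hi]))
  have hF0 : F 0 = x' := by
    rw [hFi 0 (Nat.zero_le n)]
    have e : (⟨0, by omega⟩ : Fin (n + 1)) = 0 := Fin.ext (by simp)
    rw [e]; exact h0
  have hFn : F n = x := by
    rw [hFi n le_rfl]
    have e : (⟨n, by omega⟩ : Fin (n + 1)) = Fin.last n := Fin.ext (by simp)
    rw [e]; exact hlast
  have hsteps : ∀ i, i < n → cheb (F (i + 1) - F i) = 1 := by
    intro i hi
    rw [hFi (i + 1) (by omega), hFi i (by omega)]
    obtain ⟨hne, ⟨s, hs1, hs2⟩, _⟩ := hf ⟨i, hi⟩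
    exact corners_cheb' hs1 hs2 hne
  have hchebs : ∀ i, i ≤ n → cheb (F i - F 0) = (i : ℤ) := by
    intro i
    induction i with
    | zero => intro _; rw [sub_self, cheb_zero']; simp
    | succ k ih =>
      intro hk
      have hk' : k < n := by omega
      have h3 := (hf ⟨k, hk'⟩).2.2
      have e0 : f 0 = F 0 := by rw [hF0]; exact h0
      have eS : f (Fin.succ ⟨k, hk'⟩) = F (k + 1) := by
        rw [hFi (k + 1) hk]
        exact congrArg f (Fin.ext (by simp))
      have eC : f (Fin.castSucc ⟨k, hk'⟩) = F k := by
        rw [hFi k (by omega)]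
        exact congrArg f (Fin.ext (by simp))
      rw [eS, eC, e0] at h3
      rw [h3, ih (by omega)]
      push_cast; ring
  have hVF : ∀ i, i ≤ n → F i ∈ V R := fun i hi => by rw [hFi i hi]; exact hVf _
  have hfat : ∀ i, 1 ≤ i → i ≤ n → ∀ q : ℤ × ℤ, cheb (q - F i) ≤ 1 → q ∈ V R := by
    intro i h1 h2 q hq
    rw [hFi i h2] at hq
    refine fat_of_nonbdry (hVf ⟨i, by omega⟩) ?_ q hq
    apply hbf
    intro e
    have : i = 0 := by simpa using congrArg Fin.val e
    omega
  have hkey := key_lemma R n F ⟨hchebs, hsteps⟩ hVF hfat y hyV (by rw [hFn, hyx])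
  rw [hF0] at hkey
  exact geoRel_of_sqReach hkey
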